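/- Let X, Y be Banach spaces, T: X → Y a closed operator, and (A_n)_{n≥0} a sequence of operators with D(T) ⊆ D(A_n) that are T-bounded: ‖A_n v‖ ≤ a_n‖v‖ + b_n‖Tv‖ for all v ∈ D(T). If a_n → 0 and b_n → 0, then T_n = T + A_n is closed for sufficiently large n and T_n converges to T in the generalized sense, i.e. the gap distance δ̃(T_n, T) between their graphs tends to 0. -/
import Mathlib


open Filter

/-- `δ(M, N) = sup { dist(u, N) : u ∈ M, ‖u‖ = 1 }`, for subsets of a Banach
space. -/
noncomputable def gapδ {Z : Type*} [NormedAddCommGroup Z] (M N : Set Z) : ℝ :=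
  ⨆ u : {u : Z // u ∈ M ∧ ‖u‖ = 1}, Metric.infDist u.1 N

/-- The gap `δ̃(M, N) = max (δ(M,N), δ(N,M))` between closed linear manifolds. -/
noncomputable def gapDist {Z : Type*} [NormedAddCommGroup Z] (M N : Set Z) : ℝ :=
  max (gapδ M N) (gapδ N M)

lemma gapδ_nonneg {Z : Type*} [NormedAddCommGroup Z] (M N : Set Z) : 0 ≤ gapδ M N :=
  Real.iSup_nonneg fun _ => Metric.infDist_nonneg

lemma gapDist_nonneg {Z : Type*} [NormedAddCommGroup Z] (M N : Set Z) : 0 ≤ gapDist M N :=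
  le_trans (gapδ_nonneg M N) (le_max_left _ _)

set_option maxHeartbeats 2000000 in
/-- Main auxiliary lemma: a single perturbation result. If `B` is `T`-bounded with
constants `a`, `b` and `a + b ≤ 1/2`, then `T + B` is closed and the gap between the
graphs is at most `a + 2*b*(1+a)`. -/
lemma kato_aux {X Y : Type*}
    [NormedAddCommGroup X] [NormedSpace ℝ X] [CompleteSpace X]
    [NormedAddCommGroup Y] [NormedSpace ℝ Y] [CompleteSpace Y]
    (T : X →ₗ.[ℝ] Y) (hTclosed : IsClosed (T.graph : Set (X × Y)))
    (B : X →ₗ.[ℝ] Y) (hdom : T.domain ≤ B.domain)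
    (a b : ℝ) (ha0 : 0 ≤ a) (hb0 : 0 ≤ b)
    (hbound : ∀ v : T.domain, ‖B ⟨(v : X), hdom v.2⟩‖ ≤ a * ‖(v : X)‖ + b * ‖T v‖)
    (hsmall : a + b ≤ 1/2) :
    IsClosed (((T + B).graph : Submodule ℝ (X × Y)) : Set (X × Y)) ∧
      gapDist (((T + B).graph : Submodule ℝ (X × Y)) : Set (X × Y))
        ((T.graph : Submodule ℝ (X × Y)) : Set (X × Y)) ≤ a + 2 * b * (1 + a) := by
  -- the projection from the graph to the domain
  have hmem : ∀ p : ↥T.graph, ((p : X × Y)).1 ∈ T.domain := fun p =>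
    T.mem_domain_of_mem_graph (y := ((p : X × Y)).2) p.2
  set d : ↥T.graph →ₗ[ℝ] ↥T.domain :=
    LinearMap.codRestrict T.domain ((LinearMap.fst ℝ X Y).comp T.graph.subtype) hmem with hd
  have hdval : ∀ p : ↥T.graph, ((d p : X) : X) = ((p : X × Y)).1 := fun p => rfl
  have hTd : ∀ p : ↥T.graph, T (d p) = ((p : X × Y)).2 := by
    intro p
    exact ((T.image_iff (hmem p)).mpr p.2).symm
  -- the perturbation as a linear map on the graph
  set Bmap : ↥T.graph →ₗ[ℝ] Y :=
    B.toFun.comp ((Submodule.inclusion hdom).comp d) with hBmap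
  have hBval : ∀ p : ↥T.graph,
      Bmap p = B ⟨((p : X × Y)).1, hdom (hmem p)⟩ := fun p => rfl
  have hB : ∀ p : ↥T.graph,
      ‖Bmap p‖ ≤ a * ‖((p : X × Y)).1‖ + b * ‖((p : X × Y)).2‖ := by
    intro p
    have := hbound (d p)
    rw [hTd p] at this
    exact this
  have hnorm1 : ∀ p : ↥T.graph, ‖((p : X × Y)).1‖ ≤ ‖p‖ := fun p => norm_fst_le (p : X × Y)
  have hnorm2 : ∀ p : ↥T.graph, ‖((p : X × Y)).2‖ ≤ ‖p‖ := fun p => norm_snd_le (p : X × Y)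
  have hB' : ∀ p : ↥T.graph, ‖Bmap p‖ ≤ (a + b) * ‖p‖ := by
    intro p
    calc ‖Bmap p‖ ≤ a * ‖((p : X × Y)).1‖ + b * ‖((p : X × Y)).2‖ := hB p
    _ ≤ a * ‖p‖ + b * ‖p‖ := by
        gcongr
        exacts [hnorm1 p, hnorm2 p]
    _ = (a + b) * ‖p‖ := by ring
  -- the comparison map Φ : graph T → X × Y with range graph (T + B)
  set Φlin : ↥T.graph →ₗ[ℝ] X × Y :=
    ((LinearMap.fst ℝ X Y).comp T.graph.subtype).prod
      (((LinearMap.snd ℝ X Y).comp T.graph.subtype) + Bmap) with hΦlin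
  have hΦval : ∀ p : ↥T.graph, Φlin p = (((p : X × Y)).1, ((p : X × Y)).2 + Bmap p) :=
    fun p => rfl
  have hΦbound : ∀ p : ↥T.graph, ‖Φlin p‖ ≤ (1 + (a + b)) * ‖p‖ := by
    intro p
    rw [hΦval p, Prod.norm_def]
    apply max_le
    · have := hnorm1 p
      nlinarith [norm_nonneg p]
    · calc ‖((p : X × Y)).2 + Bmap p‖ ≤ ‖((p : X × Y)).2‖ + ‖Bmap p‖ := norm_add_le _ _
      _ ≤ ‖p‖ + (a + b) * ‖p‖ := add_le_add (hnorm2 p) (hB' p)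
      _ = (1 + (a + b)) * ‖p‖ := by ring
  set Φ : ↥T.graph →L[ℝ] X × Y := Φlin.mkContinuous (1 + (a + b)) hΦbound with hΦ
  have hΦapp : ∀ p : ↥T.graph, Φ p = (((p : X × Y)).1, ((p : X × Y)).2 + Bmap p) :=
    fun p => rfl
  -- Φ is antilipschitz
  have hanti : AntilipschitzWith 2 Φ := by
    apply Φ.antilipschitz_of_bound
    intro p
    have h1 : ‖((p : X × Y)).1‖ ≤ ‖Φ p‖ := by
      rw [hΦapp p]
      exact norm_fst_le (((p : X × Y)).1, ((p : X × Y)).2 + Bmap p)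
    have h2 : ‖((p : X × Y)).2‖ ≤ ‖Φ p‖ + ‖p‖ / 2 := by
      have hb2 : ‖Bmap p‖ ≤ ‖p‖ / 2 := by
        have := hB' p
        nlinarith [norm_nonneg p]
      calc ‖((p : X × Y)).2‖ = ‖(((p : X × Y)).2 + Bmap p) - Bmap p‖ := by
            rw [add_sub_cancel_right]
      _ ≤ ‖((p : X × Y)).2 + Bmap p‖ + ‖Bmap p‖ := norm_sub_le _ _
      _ ≤ ‖Φ p‖ + ‖p‖ / 2 := by
          apply add_le_add _ hb2
          rw [hΦapp p]
          exact norm_snd_le (((p : X × Y)).1, ((p : X × Y)).2 + Bmap p)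
    have hpn : ‖p‖ = max ‖((p : X × Y)).1‖ ‖((p : X × Y)).2‖ := by
      rw [show ‖p‖ = ‖(p : X × Y)‖ from rfl, Prod.norm_def]
    have : ‖p‖ ≤ ‖Φ p‖ + ‖p‖ / 2 := by
      rw [hpn]
      exact max_le (le_trans h1 (by linarith [norm_nonneg p])) h2
    push_cast
    linarith
  -- completeness of the graph
  haveI : CompleteSpace ↥(T.graph : Set (X × Y)) := hTclosed.completeSpace_coe
  haveI : CompleteSpace ↥T.graph := ‹CompleteSpace ↥(T.graph : Set (X × Y))›
  -- range of Φ equals the graph of T + B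
  have hrange : Set.range Φ = (((T + B).graph : Submodule ℝ (X × Y)) : Set (X × Y)) := by
    ext q
    constructor
    · rintro ⟨p, rfl⟩
      rw [hΦapp p]
      apply (T + B).mem_graph_iff.mpr
      refine ⟨⟨((p : X × Y)).1, ⟨hmem p, hdom (hmem p)⟩⟩, rfl, ?_⟩
      rw [LinearPMap.add_apply]
      rw [hBval p]
      congr 1
      exact hTd p
    · intro hq
      obtain ⟨v, hv1, hv2⟩ := (T + B).mem_graph_iff.mp hq
      have hv2' : T ⟨(v : X), v.2.1⟩ + B ⟨(v : X), v.2.2⟩ = q.2 := by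
        rw [← hv2, LinearPMap.add_apply]
      refine ⟨⟨((v : X), T ⟨(v : X), v.2.1⟩), T.mem_graph ⟨(v : X), v.2.1⟩⟩, ?_⟩
      rw [hΦapp]
      exact Prod.ext hv1 hv2'
  have hclosed : IsClosed (((T + B).graph : Submodule ℝ (X × Y)) : Set (X × Y)) := by
    rw [← hrange]
    exact hanti.isClosed_range Φ.uniformContinuous
  refine ⟨hclosed, ?_⟩
  have hc0 : (0:ℝ) ≤ a + 2 * b * (1 + a) := by nlinarith
  -- gap bounds
  apply max_le
  · -- δ(graph(T+B), graph T) ≤ a + 2b(1+a)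
    apply Real.iSup_le _ hc0
    rintro ⟨u, hu, hu1⟩
    obtain ⟨v, hv1, hv2⟩ := (T + B).mem_graph_iff.mp hu
    set x : T.domain := ⟨(v : X), v.2.1⟩ with hx
    have hv2' : T x + B ⟨(v : X), v.2.2⟩ = u.2 := by
      rw [← hv2, LinearPMap.add_apply]
    have hBx : ‖B ⟨(v : X), v.2.2⟩‖ ≤ a * ‖(v : X)‖ + b * ‖T x‖ := hbound x
    have hxu : ‖(v : X)‖ ≤ 1 := by
      rw [hv1]
      calc ‖u.1‖ ≤ ‖u‖ := norm_fst_le u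
      _ = 1 := hu1
    have hu2 : ‖u.2‖ ≤ 1 := by
      calc ‖u.2‖ ≤ ‖u‖ := norm_snd_le u
      _ = 1 := hu1
    have hTx : ‖T x‖ ≤ 2 * (1 + a) := by
      have h1 : ‖T x‖ ≤ ‖T x + B ⟨(v : X), v.2.2⟩‖ + ‖B ⟨(v : X), v.2.2⟩‖ := by
        calc ‖T x‖ = ‖(T x + B ⟨(v : X), v.2.2⟩) - B ⟨(v : X), v.2.2⟩‖ := by
              rw [add_sub_cancel_right]
        _ ≤ _ := norm_sub_le _ _
      rw [hv2'] at h1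
      nlinarith [norm_nonneg (T x), norm_nonneg ((v : X))]
    have hBx' : ‖B ⟨(v : X), v.2.2⟩‖ ≤ a + 2 * b * (1 + a) := by
      calc ‖B ⟨(v : X), v.2.2⟩‖ ≤ a * ‖(v : X)‖ + b * ‖T x‖ := hBx
      _ ≤ a * 1 + b * (2 * (1 + a)) := by gcongr
      _ = a + 2 * b * (1 + a) := by ring
    calc Metric.infDist u (T.graph : Set (X × Y))
        ≤ dist u ((v : X), T x) := Metric.infDist_le_dist_of_mem (T.mem_graph x)
    _ = ‖u - ((v : X), T x)‖ := dist_eq_norm _ _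
    _ ≤ a + 2 * b * (1 + a) := by
        have : u - ((v : X), T x) = (u.1 - (v : X), u.2 - T x) := rfl
        rw [this, Prod.norm_def]
        apply max_le
        · simp only [hv1, sub_self, norm_zero]
          exact hc0
        · have : u.2 - T x = B ⟨(v : X), v.2.2⟩ := by
            rw [← hv2']
            abel
          rw [this]
          exact hBx'
  · -- δ(graph T, graph(T+B)) ≤ a + b ≤ a + 2b(1+a)
    apply Real.iSup_le _ hc0
    rintro ⟨u, hu, hu1⟩
    obtain ⟨v, hv1, hv2⟩ := T.mem_graph_iff.mp hu
    have hmem' : ((v : X), T v + B ⟨(v : X), hdom v.2⟩) ∈ (T + B).graph := by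
      apply (T + B).mem_graph_iff.mpr
      refine ⟨⟨(v : X), ⟨v.2, hdom v.2⟩⟩, rfl, ?_⟩
      rw [LinearPMap.add_apply]
    have hxu : ‖(v : X)‖ ≤ 1 := by
      rw [hv1]
      calc ‖u.1‖ ≤ ‖u‖ := norm_fst_le u
      _ = 1 := hu1
    have hTv : ‖T v‖ ≤ 1 := by
      rw [hv2]
      calc ‖u.2‖ ≤ ‖u‖ := norm_snd_le u
      _ = 1 := hu1
    have hBv : ‖B ⟨(v : X), hdom v.2⟩‖ ≤ a + b := by
      calc ‖B ⟨(v : X), hdom v.2⟩‖ ≤ a * ‖(v : X)‖ + b * ‖T v‖ := hbound v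
      _ ≤ a * 1 + b * 1 := by gcongr
      _ = a + b := by ring
    calc Metric.infDist u (((T + B).graph : Submodule ℝ (X × Y)) : Set (X × Y))
        ≤ dist u ((v : X), T v + B ⟨(v : X), hdom v.2⟩) :=
          Metric.infDist_le_dist_of_mem hmem'
    _ = ‖u - ((v : X), T v + B ⟨(v : X), hdom v.2⟩)‖ := dist_eq_norm _ _
    _ ≤ a + 2 * b * (1 + a) := by
        have heq : u - ((v : X), T v + B ⟨(v : X), hdom v.2⟩)
            = (u.1 - (v : X), u.2 - (T v + B ⟨(v : X), hdom v.2⟩)) := rfl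
        rw [heq, Prod.norm_def]
        apply max_le
        · simp only [hv1, sub_self, norm_zero]
          exact hc0
        · have : u.2 - (T v + B ⟨(v : X), hdom v.2⟩) = -(B ⟨(v : X), hdom v.2⟩) := by
            rw [← hv2]
            abel
          rw [this, norm_neg]
          nlinarith

/-- Kato: let `T : X → Y` be a closed (unbounded, partially
defined) operator, and `Aₙ` a sequence of operators with `D(T) ⊆ D(Aₙ)` that
are `T`-bounded, `‖Aₙ v‖ ≤ aₙ‖v‖ + bₙ‖Tv‖`, with `aₙ → 0` and `bₙ → 0`.
Then `Tₙ = T + Aₙ` is closed for sufficiently large `n`, and `Tₙ → T` in the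
generalized sense: the gap between the graphs tends to `0`. -/
theorem stmt_4 {X Y : Type*}
    [NormedAddCommGroup X] [NormedSpace ℝ X] [CompleteSpace X]
    [NormedAddCommGroup Y] [NormedSpace ℝ Y] [CompleteSpace Y]
    (T : X →ₗ.[ℝ] Y) (hTclosed : IsClosed (T.graph : Set (X × Y)))
    (A : ℕ → (X →ₗ.[ℝ] Y))
    (hdom : ∀ n, T.domain ≤ (A n).domain)
    (a b : ℕ → ℝ) (ha0 : ∀ n, 0 ≤ a n) (hb0 : ∀ n, 0 ≤ b n)
    (hbound : ∀ n, ∀ v : T.domain,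
      ‖(A n) ⟨(v : X), hdom n v.2⟩‖ ≤ a n * ‖(v : X)‖ + b n * ‖T v‖)
    (ha : Tendsto a atTop (nhds 0)) (hb : Tendsto b atTop (nhds 0)) :
    (∃ N : ℕ, ∀ n ≥ N, IsClosed ((T + A n).graph : Set (X × Y))) ∧
      Tendsto (fun n => gapDist ((T + A n).graph : Set (X × Y))
        (T.graph : Set (X × Y))) atTop (nhds 0) := by
  have hsmall : ∀ᶠ n in atTop, a n + b n ≤ 1/2 := by
    have : Tendsto (fun n => a n + b n) atTop (nhds 0) := by
      simpa using ha.add hb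
    have := this.eventually (eventually_le_nhds (by norm_num : (0:ℝ) < 1/2))
    exact this
  have key : ∀ n, a n + b n ≤ 1/2 →
      IsClosed (((T + A n).graph : Submodule ℝ (X × Y)) : Set (X × Y)) ∧
        gapDist (((T + A n).graph : Submodule ℝ (X × Y)) : Set (X × Y))
          ((T.graph : Submodule ℝ (X × Y)) : Set (X × Y)) ≤ a n + 2 * b n * (1 + a n) :=
    fun n hn => kato_aux T hTclosed (A n) (hdom n) (a n) (b n) (ha0 n) (hb0 n)
      (hbound n) hn
  obtain ⟨N, hN⟩ := eventually_atTop.mp hsmall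
  constructor
  · exact ⟨N, fun n hn => (key n (hN n hn)).1⟩
  · have hlim : Tendsto (fun n => a n + 2 * b n * (1 + a n)) atTop (nhds 0) := by
      have h1 : Tendsto (fun n => 2 * b n) atTop (nhds (2 * 0)) := hb.const_mul 2
      have h2 : Tendsto (fun n => 1 + a n) atTop (nhds (1 + 0)) := ha.const_add 1
      have := ha.add (h1.mul h2)
      simpa using this
    apply tendsto_of_tendsto_of_tendsto_of_le_of_le' tendsto_const_nhds hlim
    · exact Eventually.of_forall fun n => gapDist_nonneg _ _
    · filter_upwards [hsmall] with n hn
      exact (key n hn).2
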